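/- Let N ≥ 1 and ζ_1,…,ζ_N, r_1,…,r_N ∈ ℂ with Re ζ_1 < Re ζ_2 < … < Re ζ_N, fix k with 1 ≤ k ≤ N, and write k̄ = N+1−k. Assume r_j ≠ 0 for j = k̄+1,…,N. Define A_0(t) = 1 and A_k(t) = Σ_{1≤l_1<…<l_k≤N} (r_{l_1}⋯r_{l_k})² W(l_1,…,l_k)² exp(−2(ζ_{l_1}+…+ζ_{l_k})t) with W(l_1,…,l_k) = Π_{p<s, p,s∈{l_1,…,l_k}}(2ζ_s − 2ζ_p). Then lim_{t→−∞} exp(2ζ_{k̄} t) · A_k(t)/A_{k−1}(t) = r_{k̄}² · Π_{s=k̄+1}^{N} (2ζ_s − 2ζ_{k̄})². (This is the statement that q_k(t) + 2ζ_{k̄} t tends to β_k^− = q_1(0) + ln r_{k̄}² + ln Π_{s=k̄+1}^{N}(2ζ_s − 2ζ_{k̄})² as t → −∞, written in exponentiated form; it expresses the 'sorting property' that the k-th particle moves with velocity −2ζ_{N+1−k} as t → −∞.) -/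

import Mathlib

/-- The tau-functions of the complex Toda chain: `tauA N ζ r k t` is the sum over
all `k`-element subsets `{l_1 < … < l_k}` of `{1,…,N}` of
`(r_{l_1}⋯r_{l_k})² W(l_1,…,l_k)² exp(-2(ζ_{l_1}+…+ζ_{l_k}) t)`, where
`W(l_1,…,l_k) = ∏_{p<s} (2ζ_s - 2ζ_p)` is the Vandermonde determinant.
In particular `tauA N ζ r 0 t = 1`. -/
noncomputable def tauA (N : ℕ) (ζ r : Fin N → ℂ) (k : ℕ) (t : ℝ) : ℂ :=
  ∑ s ∈ Finset.powersetCard k (Finset.univ : Finset (Fin N)),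
    (∏ j ∈ s, r j) ^ 2 *
    (∏ p ∈ s, ∏ q ∈ s, if p < q then 2 * ζ q - 2 * ζ p else 1) ^ 2 *
    Complex.exp (-2 * (∑ j ∈ s, ζ j) * t)

open Finset Filter

namespace Stmt9

/-- The "top" m-element subset of `Fin N`. -/
def top (N m : ℕ) : Finset (Fin N) := Finset.univ.filter (fun j => N - m ≤ (j : ℕ))

lemma mem_top {N m : ℕ} {j : Fin N} : j ∈ top N m ↔ N - m ≤ (j : ℕ) := by
  simp [top]

lemma card_top (N m : ℕ) (hm : m ≤ N) : (top N m).card = m := by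
  have : top N m = Finset.image (fun i : Fin m => (⟨N - m + (i : ℕ), by omega⟩ : Fin N))
      Finset.univ := by
    ext j
    simp only [mem_top, Finset.mem_image, Finset.mem_univ, true_and]
    constructor
    · intro h
      exact ⟨⟨(j : ℕ) - (N - m), by have := j.isLt; omega⟩, by
        apply Fin.ext; simp; omega⟩
    · rintro ⟨i, rfl⟩; simp
  rw [this, Finset.card_image_of_injective _ (fun a b hab => by
    have : N - m + (a : ℕ) = N - m + (b : ℕ) := congrArg Fin.val hab
    exact Fin.ext (by omega)), Finset.card_univ, Fintype.card_fin]

lemma sum_lt_top {N : ℕ} (g : Fin N → ℝ)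
    (hg : ∀ i j : Fin N, (i : ℕ) < (j : ℕ) → g i < g j) (m : ℕ) (hm : m ≤ N) :
    ∀ n (s : Finset (Fin N)), (s \ top N m).card = n → s.card = m → s ≠ top N m →
      ∑ j ∈ s, g j < ∑ j ∈ top N m, g j := by
  intro n
  induction n with
  | zero =>
    intro s hcard hsm hne
    exfalso
    apply hne
    have hsub : s ⊆ top N m := by
      intro x hx
      by_contra hxt
      have : x ∈ s \ top N m := Finset.mem_sdiff.2 ⟨hx, hxt⟩
      rw [Finset.card_eq_zero.1 hcard] at this
      simp at this
    exact Finset.eq_of_subset_of_card_le hsub (by rw [hsm, card_top N m hm])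
  | succ n ih =>
    intro s hcard hsm hne
    have hne' : (s \ top N m).Nonempty := by
      rw [← Finset.card_pos, hcard]; omega
    obtain ⟨a, ha⟩ := hne'
    have has : a ∈ s := (Finset.mem_sdiff.1 ha).1
    have hat : a ∉ top N m := (Finset.mem_sdiff.1 ha).2
    have hcomm : (top N m \ s).card = n + 1 := by
      rw [← Finset.card_sdiff_comm (by rw [hsm, card_top N m hm]), hcard]
    have : (top N m \ s).Nonempty := by rw [← Finset.card_pos, hcomm]; omega
    obtain ⟨b, hb⟩ := this
    have hbt : b ∈ top N m := (Finset.mem_sdiff.1 hb).1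
    have hbs : b ∉ s := (Finset.mem_sdiff.1 hb).2
    have hab : g a < g b := by
      apply hg
      have h1 : (a : ℕ) < N - m := by
        by_contra h; exact hat (mem_top.2 (by omega))
      have h2 : N - m ≤ (b : ℕ) := mem_top.1 hbt
      omega
    set s' := insert b (s.erase a) with hs'
    have hbe : b ∉ s.erase a := fun h => hbs (Finset.mem_of_mem_erase h)
    have hs'card : s'.card = m := by
      rw [hs', Finset.card_insert_of_notMem hbe, Finset.card_erase_of_mem has, hsm]
      have : 1 ≤ m := by
        by_contra h
        interval_cases m
        · simp at hsm; subst hsm; simp at has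
      omega
    have hsdiff : s' \ top N m = (s \ top N m).erase a := by
      ext x
      simp only [hs', Finset.mem_sdiff, Finset.mem_insert, Finset.mem_erase]
      constructor
      · rintro ⟨h1 | ⟨h2, h3⟩, h4⟩
        · exact absurd hbt (h1 ▸ h4)
        · exact ⟨h2, h3, h4⟩
      · rintro ⟨h1, h2, h3⟩; exact ⟨Or.inr ⟨h1, h2⟩, h3⟩
    have hs'sdcard : (s' \ top N m).card = n := by
      rw [hsdiff, Finset.card_erase_of_mem (Finset.mem_sdiff.2 ⟨has, hat⟩), hcard]
      omega
    have hsum : ∑ j ∈ s', g j = ∑ j ∈ s, g j - g a + g b := by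
      rw [hs', Finset.sum_insert hbe, Finset.sum_erase_eq_sub has]; ring
    have hlt : ∑ j ∈ s, g j < ∑ j ∈ s', g j := by rw [hsum]; linarith
    rcases eq_or_ne s' (top N m) with h | h
    · rw [← h]; exact hlt
    · exact hlt.trans (ih s' hs'sdcard hs'card h)

noncomputable def coef (N : ℕ) (ζ r : Fin N → ℂ) (s : Finset (Fin N)) : ℂ :=
  (∏ j ∈ s, r j) ^ 2 *
    (∏ p ∈ s, ∏ q ∈ s, if p < q then 2 * ζ q - 2 * ζ p else 1) ^ 2

noncomputable def B (N : ℕ) (ζ r : Fin N → ℂ) (m : ℕ) (t : ℝ) : ℂ :=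
  ∑ s ∈ Finset.powersetCard m (Finset.univ : Finset (Fin N)),
    coef N ζ r s *
      Complex.exp ((2 * (∑ j ∈ top N m, ζ j) - 2 * ∑ j ∈ s, ζ j) * t)

lemma B_eq (N : ℕ) (ζ r : Fin N → ℂ) (m : ℕ) (t : ℝ) :
    B N ζ r m t = Complex.exp (2 * (∑ j ∈ top N m, ζ j) * t) * tauA N ζ r m t := by
  unfold tauA B coef
  conv_rhs => rw [Finset.mul_sum]
  refine Finset.sum_congr rfl fun s _ => ?_
  rw [show ((2 * (∑ j ∈ top N m, ζ j) - 2 * ∑ j ∈ s, ζ j) * (t : ℂ))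
      = 2 * (∑ j ∈ top N m, ζ j) * (t : ℂ) + -2 * (∑ j ∈ s, ζ j) * (t : ℂ) by ring,
    Complex.exp_add]
  ring

lemma tendsto_exp_mul_atBot (w : ℂ) (hw : 0 < w.re) :
    Tendsto (fun t : ℝ => Complex.exp (w * t)) atBot (nhds 0) := by
  rw [tendsto_zero_iff_norm_tendsto_zero]
  have heq : ∀ t : ℝ, ‖Complex.exp (w * t)‖ = Real.exp (w.re * t) := by
    intro t
    rw [Complex.norm_exp]
    congr 1
    simp [Complex.mul_re]
  simp only [heq]
  exact Real.tendsto_exp_atBot.comp (tendsto_const_mul_atBot_of_pos hw |>.2 tendsto_id)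

lemma top_mem_powersetCard (N m : ℕ) (hm : m ≤ N) :
    top N m ∈ Finset.powersetCard m (Finset.univ : Finset (Fin N)) := by
  rw [Finset.mem_powersetCard]
  exact ⟨Finset.subset_univ _, card_top N m hm⟩

lemma tendsto_B (N : ℕ) (ζ r : Fin N → ℂ)
    (hsort : ∀ i j : Fin N, (i : ℕ) < (j : ℕ) → (ζ i).re < (ζ j).re)
    (m : ℕ) (hm : m ≤ N) :
    Tendsto (B N ζ r m) atBot (nhds (coef N ζ r (top N m))) := by
  have hkey : coef N ζ r (top N m) =
      ∑ s ∈ Finset.powersetCard m (Finset.univ : Finset (Fin N)),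
        (if s = top N m then coef N ζ r s else 0) := by
    rw [Finset.sum_ite_eq' _ (top N m) (coef N ζ r), if_pos (top_mem_powersetCard N m hm)]
  rw [hkey]
  unfold B
  apply tendsto_finset_sum
  intro s hs
  rcases eq_or_ne s (top N m) with h | h
  · rw [if_pos h]
    have heq : ∀ t : ℝ, coef N ζ r s *
        Complex.exp ((2 * (∑ j ∈ top N m, ζ j) - 2 * ∑ j ∈ s, ζ j) * t) = coef N ζ r s := by
      intro t; rw [h, sub_self, zero_mul, Complex.exp_zero, mul_one]
    simp only [heq]
    exact tendsto_const_nhds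
  · rw [if_neg h]
    have hre : 0 < ((2 * (∑ j ∈ top N m, ζ j) - 2 * ∑ j ∈ s, ζ j) : ℂ).re := by
      have hlt : ∑ j ∈ s, (ζ j).re < ∑ j ∈ top N m, (ζ j).re := by
        have hcard : s.card = m := (Finset.mem_powersetCard.1 hs).2
        exact sum_lt_top (fun j => (ζ j).re) hsort m hm _ s rfl hcard h
      simp only [Complex.sub_re, Complex.mul_re, Complex.re_sum]
      norm_num
      linarith
    have := (tendsto_exp_mul_atBot _ hre).const_mul (coef N ζ r s)
    simpa using this

end Stmt9

/-- under the sorting condition `Re ζ_1 < … < Re ζ_N` and with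
`r_{k̄+1},…,r_N ≠ 0`, where `k̄ = N+1-k`, one has
`lim_{t→-∞} exp(2 ζ_{k̄} t) A_k(t)/A_{k-1}(t) = r_{k̄}² ∏_{s>k̄} (2ζ_s - 2ζ_{k̄})²`
(the exponentiated form of `q_k(t) + 2ζ_{k̄} t → β_k⁻` as `t → -∞`, the sorting
property).  Here `k : Fin N` is 0-based (the paper's `k - 1`), so the paper's
`k̄ = N+1-k` is the 0-based index `N-1-k`. -/
theorem stmt_9 (N : ℕ) (hN : 1 ≤ N) (ζ r : Fin N → ℂ)
    (hsort : ∀ i j : Fin N, (i : ℕ) < (j : ℕ) → (ζ i).re < (ζ j).re)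
    (k : Fin N)
    (hr : ∀ j : Fin N, N - 1 - (k : ℕ) < (j : ℕ) → r j ≠ 0) :
    letI kbar : Fin N := ⟨N - 1 - (k : ℕ), by have := k.isLt; omega⟩
    Filter.Tendsto
      (fun t : ℝ =>
        Complex.exp (2 * ζ kbar * t) * (tauA N ζ r ((k : ℕ) + 1) t / tauA N ζ r (k : ℕ) t))
      Filter.atBot
      (nhds ((r kbar) ^ 2 *
        (∏ s ∈ Finset.univ.filter (fun s : Fin N => (kbar : ℕ) < (s : ℕ)),
          (2 * ζ s - 2 * ζ kbar)) ^ 2)) := by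
  have hkN : (k : ℕ) < N := k.isLt
  set kbar : Fin N := ⟨N - 1 - (k : ℕ), by have := k.isLt; omega⟩ with hkbar
  have hkv : (kbar : ℕ) = N - 1 - (k : ℕ) := rfl
  set m : ℕ := (k : ℕ) with hm
  have hmN : m ≤ N := le_of_lt hkN
  have hm1N : m + 1 ≤ N := hkN
  -- kbar not in top N m, and top N (m+1) = insert kbar (top N m)
  have hkb : kbar ∉ Stmt9.top N m := by
    rw [Stmt9.mem_top, hkv]; omega
  have hins : Stmt9.top N (m + 1) = insert kbar (Stmt9.top N m) := by
    ext j
    simp only [Stmt9.mem_top, Finset.mem_insert, Fin.ext_iff, hkv]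
    omega
  have hSsum : ∑ j ∈ Stmt9.top N (m + 1), ζ j = ζ kbar + ∑ j ∈ Stmt9.top N m, ζ j := by
    rw [hins, Finset.sum_insert hkb]
  have hfilter : Finset.univ.filter (fun s : Fin N => (kbar : ℕ) < (s : ℕ)) =
      Stmt9.top N m := by
    ext j
    simp only [Finset.mem_filter, Finset.mem_univ, true_and, Stmt9.mem_top, hkv]
    omega
  -- members of top N m are strictly above kbar
  have hmem : ∀ q ∈ Stmt9.top N m, (kbar : ℕ) < (q : ℕ) := by
    intro q hq
    rw [Stmt9.mem_top] at hq
    rw [hkv]; omega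
  set P : ℂ := ∏ j ∈ Stmt9.top N m, r j with hP
  set V : ℂ := ∏ p ∈ Stmt9.top N m, ∏ q ∈ Stmt9.top N m,
      if p < q then 2 * ζ q - 2 * ζ p else 1 with hV
  set Q : ℂ := ∏ q ∈ Stmt9.top N m, (2 * ζ q - 2 * ζ kbar) with hQ
  have hC0def : Stmt9.coef N ζ r (Stmt9.top N m) = P ^ 2 * V ^ 2 := rfl
  -- coefficient of the top (m+1)-set
  have hC1 : Stmt9.coef N ζ r (Stmt9.top N (m + 1)) = (r kbar * P) ^ 2 * (Q * V) ^ 2 := by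
    rw [Stmt9.coef, hins, Finset.prod_insert hkb, Finset.prod_insert hkb]
    congr 2
    have hinner1 : ∏ q ∈ insert kbar (Stmt9.top N m),
        (if kbar < q then 2 * ζ q - 2 * ζ kbar else 1) = Q := by
      rw [Finset.prod_insert hkb, if_neg (lt_irrefl kbar), one_mul, hQ]
      refine Finset.prod_congr rfl fun q hq => ?_
      rw [if_pos]
      exact Fin.lt_def.2 (hmem q hq)
    have hinner2 : ∏ p ∈ Stmt9.top N m, ∏ q ∈ insert kbar (Stmt9.top N m),
        (if p < q then 2 * ζ q - 2 * ζ p else 1) = V := by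
      rw [hV]
      refine Finset.prod_congr rfl fun p hp => ?_
      rw [Finset.prod_insert hkb, if_neg, one_mul]
      intro hlt
      exact absurd (Fin.lt_def.1 hlt) (by have := hmem p hp; omega)
    rw [hinner1, hinner2]
  -- nonvanishing
  have hPne : P ≠ 0 := by
    rw [hP]
    refine Finset.prod_ne_zero_iff.2 fun j hj => ?_
    exact hr j (by rw [← hkv]; exact hmem j hj)
  have hVne : V ≠ 0 := by
    rw [hV]
    refine Finset.prod_ne_zero_iff.2 fun p _ => ?_
    refine Finset.prod_ne_zero_iff.2 fun q _ => ?_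
    split_ifs with h
    · intro h0
      have hre : (2 * ζ q - 2 * ζ p).re = 0 := by rw [h0]; simp
      have := hsort p q (Fin.lt_def.1 h)
      simp only [Complex.sub_re, Complex.mul_re, Complex.re_ofNat, Complex.im_ofNat] at hre
      nlinarith
    · exact one_ne_zero
  have hC0ne : Stmt9.coef N ζ r (Stmt9.top N m) ≠ 0 := by
    rw [hC0def]
    exact mul_ne_zero (pow_ne_zero _ hPne) (pow_ne_zero _ hVne)
  -- limit of the ratio of B's
  have hlim : Filter.Tendsto (fun t => Stmt9.B N ζ r (m + 1) t / Stmt9.B N ζ r m t)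
      Filter.atBot (nhds ((r kbar) ^ 2 * Q ^ 2)) := by
    have hdiv := (Stmt9.tendsto_B N ζ r hsort (m + 1) hm1N).div
      (Stmt9.tendsto_B N ζ r hsort m hmN) hC0ne
    have hval : Stmt9.coef N ζ r (Stmt9.top N (m + 1)) / Stmt9.coef N ζ r (Stmt9.top N m)
        = (r kbar) ^ 2 * Q ^ 2 := by
      rw [hC1, hC0def]
      field_simp
    rwa [hval] at hdiv
  -- pointwise identity
  have hpt : ∀ t : ℝ, Stmt9.B N ζ r (m + 1) t / Stmt9.B N ζ r m t =
      Complex.exp (2 * ζ kbar * t) * (tauA N ζ r (m + 1) t / tauA N ζ r m t) := by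
    intro t
    rw [Stmt9.B_eq, Stmt9.B_eq, mul_div_mul_comm, ← Complex.exp_sub,
      show 2 * (∑ j ∈ Stmt9.top N (m + 1), ζ j) * (t : ℂ) -
          2 * (∑ j ∈ Stmt9.top N m, ζ j) * (t : ℂ) = 2 * ζ kbar * (t : ℂ) by
        rw [hSsum]; ring]
  rw [hfilter]
  exact hlim.congr fun t => hpt t
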